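/- Let G be a noncompact locally compact group, 𝒜 a unital left-translation-invariant amenable C*-subalgebra of LUC(G), T an 𝒜-set in G, and suppose UT is right translation-compact for some neighbourhood U of e. Then μ(ε(V)·closure(ε(T))) = 0 for every relatively compact neighbourhood V of e and every left invariant mean μ on 𝒜 (regarded as a Borel measure on G^𝒜). -/

import Mathlib

open Pointwise

set_option linter.unusedSectionVars false
set_option maxHeartbeats 1000000

section Helpers

open MeasureTheory

variable {X : Type*} [TopologicalSpace X] [CompactSpace X] [T2Space X]
  [MeasurableSpace X] [BorelSpace X] (μ : Measure X) [IsProbabilityMeasure μ]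

lemma aux_integrable {f : X → ℝ} (hf : Continuous f) : Integrable f μ :=
  hf.integrable_of_hasCompactSupport
    (IsCompact.of_isClosed_subset isCompact_univ (isClosed_tsupport f) (Set.subset_univ _))

lemma aux_markov {f : X → ℝ} (hf : Continuous f) (hf0 : ∀ x, 0 ≤ f x)
    {S : Set X} (hS : ∀ x ∈ S, 1 ≤ f x) : (μ S).toReal ≤ ∫ x, f x ∂μ := by
  have h := mul_meas_ge_le_integral_of_nonneg (μ := μ)
    (Filter.Eventually.of_forall hf0) (aux_integrable μ hf) 1
  rw [one_mul] at h
  refine le_trans ?_ h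
  have hmono : μ S ≤ μ {x | 1 ≤ f x} := measure_mono hS
  exact ENNReal.toReal_mono (measure_ne_top μ _) hmono

lemma aux_sq_integral {f : X → ℝ} (hf : Continuous f) :
    (∫ x, f x ∂μ) ^ 2 ≤ ∫ x, (f x) ^ 2 ∂μ := by
  set c := ∫ x, f x ∂μ with hc
  have h0 : 0 ≤ ∫ x, (f x - c) ^ 2 ∂μ := integral_nonneg fun x => sq_nonneg _
  have hint1 : Integrable (fun x => (f x) ^ 2) μ := aux_integrable μ (hf.pow 2)
  have hint2 : Integrable (fun x => (2 * c) * f x) μ := (aux_integrable μ hf).const_mul _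
  have hexp : (fun x => (f x - c) ^ 2) = fun x => ((f x) ^ 2 - (2 * c) * f x) + c ^ 2 := by
    funext x; ring
  rw [hexp] at h0
  have hint12 : Integrable (fun x => (f x) ^ 2 - (2 * c) * f x) μ := hint1.sub hint2
  rw [integral_add hint12 (integrable_const _), integral_sub hint1 hint2,
    integral_const_mul, integral_const] at h0
  simp only [probReal_univ, ENNReal.toReal_one, smul_eq_mul, one_mul] at h0
  nlinarith [h0]

lemma aux_le_on_dense {f : X → ℝ} (hf : Continuous f) {D : Set X} (hD : Dense D)
    {c : ℝ} (h : ∀ x ∈ D, f x ≤ c) : ∀ x, f x ≤ c := by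
  intro x
  have hclosed : IsClosed {y : X | f y ≤ c} := isClosed_le hf continuous_const
  have : closure D ⊆ {y : X | f y ≤ c} := closure_minimal h hclosed
  exact this (by rw [hD.closure_eq]; trivial)

lemma aux_eq_on_closure {f : X → ℝ} (hf : Continuous f) {S : Set X} {c : ℝ}
    (h : ∀ x ∈ S, f x = c) : ∀ x ∈ closure S, f x = c := by
  intro x hx
  have hclosed : IsClosed {y : X | f y = c} := isClosed_eq hf continuous_const
  exact closure_minimal h hclosed hx

lemma aux_open_subset_closure {Y : Type*} [TopologicalSpace Y] {e : Y → X}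
    (he : DenseRange e) {O : Set X} (hO : IsOpen O) :
    O ⊆ closure (e '' (e ⁻¹' O)) := by
  intro x hx
  rw [mem_closure_iff]
  intro N hN hxN
  have : (N ∩ O).Nonempty := ⟨x, hxN, hx⟩
  obtain ⟨t, ht⟩ := he.exists_mem_open (hN.inter hO) this
  exact ⟨e t, ht.1, ⟨t, ht.2, rfl⟩⟩

end Helpers

/-- An abstract model of the compactification `G^𝒜` associated to a unital
left-translation-invariant C*-subalgebra `A` of `CB(G)`: a compact Hausdorff space `X` together
with the (dense-range) evaluation map `ε : G → X`, the natural left action of `G` on `X`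
(`(ε(s)x)(f) = x(ₛf)`), and the Gelfand correspondence identifying `A` with `C(X)`. -/
structure GCompactification (G : Type*) [TopologicalSpace G] [Group G]
    (A : Set (G → ℂ)) (X : Type*) [TopologicalSpace X] [CompactSpace X] [T2Space X] where
  eps : G → X
  dense : DenseRange eps
  act : G → X → X
  act_eps : ∀ s t : G, act s (eps t) = eps (s * t)
  act_mul : ∀ s t : G, ∀ x : X, act (s * t) x = act s (act t x)
  act_cont : ∀ s : G, Continuous (act s)
  gelfand : (G → ℂ) → (X → ℂ)
  gelfand_cont : ∀ f ∈ A, Continuous (gelfand f)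
  gelfand_eps : ∀ f ∈ A, ∀ s : G, gelfand f (eps s) = f s
  mem_of_cont : ∀ φ : X → ℂ, Continuous φ → (fun s => φ (eps s)) ∈ A

/-- The semigroup compactification `G^𝒜` of an admissible subalgebra `A`: additionally `X` carries
an associative multiplication which is right topological, extends that of `G`, and restricts to
the action of `G`. -/
structure GSemigroupCompactification (G : Type*) [TopologicalSpace G] [Group G]
    (A : Set (G → ℂ)) (X : Type*) [TopologicalSpace X] [CompactSpace X] [T2Space X]
    extends GCompactification G A X where
  mul : X → X → X
  mul_assoc : ∀ x y z : X, mul (mul x y) z = mul x (mul y z)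
  right_cont : ∀ y : X, Continuous fun x => mul x y
  eps_act : ∀ (s : G) (x : X), mul (eps s) x = act s x

/-- `T` is an `𝒜`-set: for every open neighbourhood `U` of `e` there is an open neighbourhood `V`
of `e` with `closure V ⊆ U` such that for each `T₁ ⊆ T` some `h ∈ A` is `1` on `VT₁` and `0` off
`UT₁`. -/
def IsASet {G : Type*} [TopologicalSpace G] [Group G] (A : Set (G → ℂ)) (T : Set G) : Prop :=
  ∀ U : Set G, IsOpen U → (1 : G) ∈ U →
    ∃ V : Set G, IsOpen V ∧ (1 : G) ∈ V ∧ closure V ⊆ U ∧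
      ∀ T₁ ⊆ T, ∃ h ∈ A, (∀ x ∈ V * T₁, h x = 1) ∧ (∀ x ∉ U * T₁, h x = 0)

/-- Right translation-compact subsets of a topological group. -/
def RightTranslationCompact {G : Type*} [Group G] [TopologicalSpace G] (T : Set G) : Prop :=
  ∀ L : Set G, ¬ IsCompact (closure L) →
    ∃ F : Set G, F ⊆ L ∧ F.Finite ∧ IsCompact (closure (⋂ b ∈ F, (b * ·) ⁻¹' T))

open MeasureTheory

/-- Theorem 8.1: if `T` is an `𝒜`-set and `UT` is right translation-compact for some
neighbourhood `U` of `e`, then every left invariant mean `μ` on `𝒜` (regarded as a regular Borel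
probability measure on `G^𝒜`) gives measure zero to `ε(V)·closure(ε(T))` for every relatively
compact neighbourhood `V` of `e`. -/
theorem invariant_mean_vanishes_on_VT
    {G : Type*} [TopologicalSpace G] [Group G] [IsTopologicalGroup G]
    [LocallyCompactSpace G] [T2Space G] [NoncompactSpace G]
    (A : Set (G → ℂ)) {X : Type*} [TopologicalSpace X] [CompactSpace X] [T2Space X]
    [MeasurableSpace X] [BorelSpace X]
    (C : GCompactification G A X)
    (hone : (fun _ : G => (1 : ℂ)) ∈ A)
    (hlinv : ∀ f ∈ A, ∀ s : G, (fun t => f (s * t)) ∈ A)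
    (hjc : Continuous fun p : G × X => C.act p.1 p.2)
    (T : Set G) (hAset : IsASet A T)
    (U : Set G) (hU : U ∈ nhds (1 : G)) (hUT : RightTranslationCompact (U * T))
    (μ : Measure X) [IsProbabilityMeasure μ] [μ.Regular]
    (hinvariant : ∀ f ∈ A, ∀ s : G,
      ∫ x, C.gelfand (fun t => f (s * t)) x ∂μ = ∫ x, C.gelfand f x ∂μ) :
    ∀ V : Set G, V ∈ nhds (1 : G) → IsCompact (closure V) →
      μ (Set.image2 C.act V (closure (C.eps '' T))) = 0 := by
  classical
  -- the Gelfand transform of `φ ∘ ε` is `φ`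
  have hgel : ∀ φ : X → ℂ, Continuous φ → C.gelfand (fun s => φ (C.eps s)) = φ := by
    intro φ hφ
    exact C.dense.equalizer (C.gelfand_cont _ (C.mem_of_cont φ hφ)) hφ
      (funext fun t => C.gelfand_eps _ (C.mem_of_cont φ hφ) t)
  -- the action of 1 is the identity
  have hact1 : ∀ x : X, C.act 1 x = x := by
    have h : C.act 1 ∘ C.eps = id ∘ C.eps := by
      funext t
      simp only [Function.comp_apply, id_eq, C.act_eps, one_mul]
    have := C.dense.equalizer (C.act_cont 1) continuous_id h
    exact fun x => congrFun this x
  -- complex-valued invariance for all continuous functions on X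
  have hINVC : ∀ (φ : X → ℂ), Continuous φ → ∀ s : G,
      ∫ x, φ (C.act s x) ∂μ = ∫ x, φ x ∂μ := by
    intro φ hφ s
    have hmem : (fun t => φ (C.eps t)) ∈ A := C.mem_of_cont φ hφ
    have h1 : C.gelfand (fun t => φ (C.eps t)) = φ := hgel φ hφ
    have hmem2 : (fun t => φ (C.eps (s * t))) ∈ A := hlinv _ hmem s
    have h2 : C.gelfand (fun t => φ (C.eps (s * t))) = fun x => φ (C.act s x) := by
      refine C.dense.equalizer (C.gelfand_cont _ hmem2) (hφ.comp (C.act_cont s))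
        (funext fun t => ?_)
      simp only [Function.comp_apply]
      rw [C.gelfand_eps _ hmem2 t, C.act_eps]
    have key := hinvariant _ hmem s
    simp only [h1] at key
    rw [show (C.gelfand fun t => φ (C.eps (s * t))) = fun x => φ (C.act s x) from h2] at key
    exact key
  -- real-valued invariance
  have hINVR : ∀ (f : X → ℝ), Continuous f → ∀ s : G,
      ∫ x, f (C.act s x) ∂μ = ∫ x, f x ∂μ := by
    intro f hf s
    have h := hINVC (fun x => (f x : ℂ)) (Complex.continuous_ofReal.comp hf) s
    have e1 : ∫ x, ((f (C.act s x) : ℝ) : ℂ) ∂μ = ((∫ x, f (C.act s x) ∂μ : ℝ) : ℂ) :=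
      integral_ofReal
    have e2 : ∫ x, ((f x : ℝ) : ℂ) ∂μ = ((∫ x, f x ∂μ : ℝ) : ℂ) := integral_ofReal
    rw [e1, e2] at h
    exact_mod_cast h
  -- zero measure from toReal bound
  have hzero_of_bnd : ∀ S : Set X, (μ S).toReal ≤ 0 → μ S = 0 := by
    intro S h
    have h0 : (μ S).toReal = 0 := le_antisymm h ENNReal.toReal_nonneg
    rcases (ENNReal.toReal_eq_zero_iff _).1 h0 with h' | h'
    · exact h'
    · exact absurd h' (measure_ne_top μ S)
  -- can escape any compact set
  have havoid : ∀ K : Set G, IsCompact K → ∃ g : G, g ∉ K := by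
    intro K hK
    by_contra h
    push_neg at h
    have : K = Set.univ := Set.eq_univ_of_forall h
    rw [this] at hK
    exact IsCompact.ne_univ hK rfl
  -- sequences with pairwise quotients avoiding a compact set
  have hseq : ∀ K : Set G, IsCompact K → ∃ s : ℕ → G,
      ∀ i j : ℕ, i ≠ j → s j * (s i)⁻¹ ∉ K := by
    intro K hK
    have hpick : ∀ Fs : Finset G, ∃ g : G, ∀ a ∈ Fs, g ∉ (K ∪ K⁻¹) * ({a} : Set G) := by
      intro Fs
      have hKc2 : ∀ a : G, IsCompact ((K ∪ K⁻¹) * ({a} : Set G)) :=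
        fun a => (hK.union hK.inv).mul isCompact_singleton
      obtain ⟨g, hg⟩ := havoid (⋃ a ∈ Fs, (K ∪ K⁻¹) * ({a} : Set G))
        (Fs.isCompact_biUnion fun a _ => hKc2 a)
      exact ⟨g, fun a ha hmem => hg (Set.mem_biUnion ha hmem)⟩
    choose pick hpick' using hpick
    set FF : ℕ → Finset G := fun n => Nat.rec ∅ (fun _ ih => insert (pick ih) ih) n with hFF
    have hFFsucc : ∀ k, FF (k + 1) = insert (pick (FF k)) (FF k) := fun k => rfl
    set s : ℕ → G := fun n => pick (FF n) with hs
    have hFFmono : ∀ i j, i ≤ j → FF i ⊆ FF j := by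
      intro i j hij
      induction j, hij using Nat.le_induction with
      | base => exact subset_rfl
      | succ j hij ih => rw [hFFsucc]; exact ih.trans (Finset.subset_insert _ _)
    have hsF : ∀ i j, i < j → s i ∈ FF j := by
      intro i j hij
      have h1 : s i ∈ FF (i + 1) := by rw [hFFsucc]; exact Finset.mem_insert_self _ _
      exact hFFmono _ _ hij h1
    refine ⟨s, fun i j hij hmem => ?_⟩
    rcases lt_or_gt_of_ne hij with h | h
    · refine hpick' (FF j) (s i) (hsF i j h) ?_
      show s j ∈ (K ∪ K⁻¹) * ({s i} : Set G)
      have heq : s j = (s j * (s i)⁻¹) * s i := by group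
      rw [heq]
      exact Set.mul_mem_mul (Or.inl hmem) rfl
    · refine hpick' (FF i) (s j) (hsF j i h) ?_
      show s i ∈ (K ∪ K⁻¹) * ({s j} : Set G)
      have heq : s i = (s j * (s i)⁻¹)⁻¹ * s j := by group
      rw [heq]
      exact Set.mul_mem_mul (Or.inr (Set.inv_mem_inv.2 hmem)) rfl
  -- choose W₀, Uo, V₀
  obtain ⟨W₀, hW₀c, hW₀n⟩ := exists_compact_mem_nhds (1 : G)
  have hW₀1 : (1 : G) ∈ W₀ := mem_of_mem_nhds hW₀n
  set Uo : Set G := interior U ∩ interior W₀ with hUodef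
  have hUoOpen : IsOpen Uo := isOpen_interior.inter isOpen_interior
  have hUo1 : (1 : G) ∈ Uo :=
    ⟨mem_interior_iff_mem_nhds.2 hU, mem_interior_iff_mem_nhds.2 hW₀n⟩
  have hUoU : Uo ⊆ U := fun x hx => interior_subset hx.1
  have hUoW : Uo ⊆ W₀ := fun x hx => interior_subset hx.2
  obtain ⟨V₀, hV₀o, hV₀1, hV₀cl, Hsep⟩ := hAset Uo hUoOpen hUo1
  -- the cutoff functions
  have hpsi : ∀ T₁ : Set G, T₁ ⊆ T → ∃ ψ : X → ℝ, Continuous ψ ∧ (∀ x, 0 ≤ ψ x) ∧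
      (∀ x, ψ x ≤ 1) ∧ (∀ t ∈ V₀ * T₁, ψ (C.eps t) = 1) ∧
      (∀ t, t ∉ Uo * T₁ → ψ (C.eps t) = 0) := by
    intro T₁ hT₁
    obtain ⟨h, hA, h1, h0⟩ := Hsep T₁ hT₁
    refine ⟨fun x => min 1 ‖C.gelfand h x‖, continuous_const.min (C.gelfand_cont h hA).norm,
      fun x => le_min zero_le_one (norm_nonneg _), fun x => min_le_left _ _, ?_, ?_⟩
    · intro t ht
      show min 1 ‖C.gelfand h (C.eps t)‖ = 1
      rw [C.gelfand_eps h hA, h1 t ht]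
      simp
    · intro t ht
      show min 1 ‖C.gelfand h (C.eps t)‖ = 0
      rw [C.gelfand_eps h hA, h0 t ht]
      simp
  -- bounded case: the integral of the cutoff vanishes
  have halpha0 : ∀ (T₁ : Set G), IsCompact (closure (Uo * T₁)) →
      ∀ ψ : X → ℝ, Continuous ψ → (∀ x, 0 ≤ ψ x) → (∀ x, ψ x ≤ 1) →
      (∀ t, t ∉ Uo * T₁ → ψ (C.eps t) = 0) → ∫ x, ψ x ∂μ = 0 := by
    intro T₁ hQc ψ hψc hψ0 hψ1 hψz
    have hKc : IsCompact (closure (Uo * T₁) * (closure (Uo * T₁))⁻¹) := hQc.mul hQc.inv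
    obtain ⟨s, hsK⟩ := hseq _ hKc
    have hα0 : 0 ≤ ∫ x, ψ x ∂μ := integral_nonneg hψ0
    have hkey : ∀ n : ℕ, (n : ℝ) * ∫ x, ψ x ∂μ ≤ 1 := by
      intro n
      have hFc : Continuous fun x => ∑ i ∈ Finset.range n, ψ (C.act (s i) x) :=
        continuous_finset_sum _ fun i _ => hψc.comp (C.act_cont (s i))
      have hFles : ∀ x ∈ Set.range C.eps,
          (∑ i ∈ Finset.range n, ψ (C.act (s i) x)) ≤ 1 := by
        rintro _ ⟨t, rfl⟩
        have hterm : ∀ i, ψ (C.act (s i) (C.eps t)) = ψ (C.eps (s i * t)) := by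
          intro i; rw [C.act_eps]
        by_cases hex : ∃ i ∈ Finset.range n, s i * t ∈ Uo * T₁
        · obtain ⟨i₀, hi₀m, hi₀⟩ := hex
          have hzero' : ∀ j ∈ Finset.range n, j ≠ i₀ → ψ (C.act (s j) (C.eps t)) = 0 := by
            intro j hj hne
            rw [hterm j]
            apply hψz
            intro hjQ
            refine hsK i₀ j (Ne.symm hne) ?_
            have heq : s j * (s i₀)⁻¹ = (s j * t) * (s i₀ * t)⁻¹ := by group
            rw [heq]
            exact Set.mul_subset_mul subset_closure (Set.inv_subset_inv.2 subset_closure)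
              (Set.mul_mem_mul hjQ (Set.inv_mem_inv.2 hi₀))
          rw [Finset.sum_eq_single_of_mem i₀ hi₀m hzero', hterm i₀]
          exact hψ1 _
        · push_neg at hex
          rw [Finset.sum_eq_zero fun i hi => by rw [hterm i]; exact hψz _ (hex i hi)]
          exact zero_le_one
      have hFle := aux_le_on_dense hFc C.dense hFles
      have hFint' : ∀ i ∈ Finset.range n, Integrable (fun x => ψ (C.act (s i) x)) μ :=
        fun i _ => aux_integrable μ (hψc.comp (C.act_cont (s i)))
      have h2 : ∫ x, (∑ i ∈ Finset.range n, ψ (C.act (s i) x)) ∂μ ≤ ∫ _x, (1 : ℝ) ∂μ :=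
        integral_mono (integrable_finset_sum _ hFint') (integrable_const _) hFle
      rw [integral_finset_sum _ hFint',
        Finset.sum_congr rfl fun i _ => hINVR ψ hψc (s i)] at h2
      simpa using h2
    by_contra hne
    have hpos : 0 < ∫ x, ψ x ∂μ := hα0.lt_of_ne (Ne.symm hne)
    obtain ⟨n, hn⟩ := exists_nat_gt (1 / ∫ x, ψ x ∂μ)
    have := hkey n
    rw [div_lt_iff₀ hpos] at hn
    linarith
  -- Markov bound for translates of the 1-region
  have hbnd : ∀ (T₁ : Set G) (ψ : X → ℝ), Continuous ψ → (∀ x, 0 ≤ ψ x) →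
      (∀ t ∈ V₀ * T₁, ψ (C.eps t) = 1) → ∀ a : G,
      (μ (closure (C.eps '' ((a * ·) '' (V₀ * T₁))))).toReal ≤ ∫ x, ψ x ∂μ := by
    intro T₁ ψ hψc hψ0 hψone a
    have hfc : Continuous fun x => ψ (C.act a⁻¹ x) := hψc.comp (C.act_cont a⁻¹)
    have hone' : ∀ y ∈ C.eps '' ((a * ·) '' (V₀ * T₁)), ψ (C.act a⁻¹ y) = 1 := by
      rintro _ ⟨_, ⟨w, hw, rfl⟩, rfl⟩
      rw [C.act_eps]
      rw [show a⁻¹ * (a * w) = w by group]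
      exact hψone w hw
    have hone'' := aux_eq_on_closure hfc hone'
    have hmk := aux_markov μ hfc (fun x => hψ0 _)
      (S := closure (C.eps '' ((a * ·) '' (V₀ * T₁)))) (fun x hx => (hone'' x hx).ge)
    rwa [hINVR ψ hψc a⁻¹] at hmk
  -- covering a compact set by finitely many translates of V₀
  have hcover : ∀ K : Set G, IsCompact K → ∃ t : Finset G, K ⊆ ⋃ g ∈ t, (g * ·) '' V₀ := by
    intro K hK
    have hcov : K ⊆ ⋃ g : G, (g * ·) '' V₀ := fun x _ =>
      Set.mem_iUnion.2 ⟨x, ⟨1, hV₀1, mul_one x⟩⟩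
    exact hK.elim_finite_subcover (fun g : G => (g * ·) '' V₀)
      (fun g => (isOpenMap_mul_left g) _ hV₀o) hcov
  -- bounded case: translates of eps-closures of Uo*T₁ are null
  have hmain0 : ∀ (T₁ : Set G), T₁ ⊆ T → IsCompact (closure (Uo * T₁)) → ∀ a : G,
      μ (closure (C.eps '' ((a * ·) '' (Uo * T₁)))) = 0 := by
    intro T₁ hT₁ hQc a
    obtain ⟨ψ₁, hψ₁c, hψ₁0, hψ₁1, hψ₁one, hψ₁z⟩ := hpsi T₁ hT₁
    have hα₁ : ∫ x, ψ₁ x ∂μ = 0 := halpha0 T₁ hQc ψ₁ hψ₁c hψ₁0 hψ₁1 hψ₁z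
    have hclUo : IsCompact (closure Uo) :=
      IsCompact.of_isClosed_subset hW₀c isClosed_closure (closure_minimal hUoW hW₀c.isClosed)
    obtain ⟨tf, htf⟩ := hcover (closure Uo) hclUo
    have hsub : C.eps '' ((a * ·) '' (Uo * T₁)) ⊆
        ⋃ g ∈ tf, closure (C.eps '' (((a * g) * ·) '' (V₀ * T₁))) := by
      rintro _ ⟨_, ⟨_, ⟨u, hu, τ, hτ, rfl⟩, rfl⟩, rfl⟩
      obtain ⟨g, hg, v, hv, hveq⟩ : ∃ g ∈ tf, ∃ v ∈ V₀, g * v = u := by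
        have := htf (subset_closure hu)
        rw [Set.mem_iUnion₂] at this
        obtain ⟨g, hg, v, hv, hveq⟩ := this
        exact ⟨g, hg, v, hv, hveq⟩
      refine Set.mem_biUnion hg (subset_closure ?_)
      refine ⟨(a * g) * (v * τ), ⟨v * τ, Set.mul_mem_mul hv hτ, rfl⟩, ?_⟩
      congr 1
      rw [← hveq]; group
    have hsub2 : closure (C.eps '' ((a * ·) '' (Uo * T₁))) ⊆
        ⋃ g ∈ tf, closure (C.eps '' (((a * g) * ·) '' (V₀ * T₁))) := by
      refine closure_minimal hsub ?_
      exact isClosed_biUnion_finset fun g _ => isClosed_closure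
    refine le_antisymm ?_ zero_le
    refine le_trans (measure_mono hsub2) ?_
    refine le_trans (measure_biUnion_finset_le _ _) ?_
    have heach : ∀ g ∈ tf, μ (closure (C.eps '' (((a * g) * ·) '' (V₀ * T₁)))) = 0 := by
      intro g _
      apply hzero_of_bnd
      have := hbnd T₁ ψ₁ hψ₁c hψ₁0 hψ₁one (a * g)
      rwa [hα₁] at this
    rw [Finset.sum_congr rfl heach]
    simp
  -- relatively compact subsets of Uo * T have null eps-closure
  have hmain1 : ∀ D : Set G, IsCompact (closure D) → D ⊆ Uo * T →
      μ (closure (C.eps '' D)) = 0 := by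
    intro D hDc hDsub
    have hT₁T : T ∩ (W₀⁻¹ * closure D) ⊆ T := Set.inter_subset_left
    have hDT : D ⊆ Uo * (T ∩ (W₀⁻¹ * closure D)) := by
      intro t ht
      obtain ⟨u, hu, τ, hτ, rfl⟩ := hDsub ht
      refine Set.mul_mem_mul hu ⟨hτ, ?_⟩
      have heq : τ = u⁻¹ * (u * τ) := by group
      rw [heq]
      exact Set.mul_mem_mul (Set.inv_mem_inv.2 (hUoW hu)) (subset_closure ht)
    have hQc : IsCompact (closure (Uo * (T ∩ (W₀⁻¹ * closure D)))) := by
      have hK₂ : IsCompact (W₀ * (W₀⁻¹ * closure D)) := hW₀c.mul (hW₀c.inv.mul hDc)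
      refine IsCompact.of_isClosed_subset hK₂ isClosed_closure (closure_minimal ?_ hK₂.isClosed)
      exact Set.mul_subset_mul hUoW Set.inter_subset_right
    have h0 := hmain0 (T ∩ (W₀⁻¹ * closure D)) hT₁T hQc 1
    have hid : ((1 : G) * ·) '' (Uo * (T ∩ (W₀⁻¹ * closure D)))
        = Uo * (T ∩ (W₀⁻¹ * closure D)) := by
      have hone : ((1 : G) * ·) = id := funext fun x => one_mul x
      rw [hone, Set.image_id]
    rw [hid] at h0
    refine le_antisymm ?_ zero_le
    calc μ (closure (C.eps '' D))
        ≤ μ (closure (C.eps '' (Uo * (T ∩ (W₀⁻¹ * closure D))))) :=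
          measure_mono (closure_mono (Set.image_mono hDT))
      _ = 0 := h0
  -- the cutoff for T itself
  obtain ⟨ψ, hψc, hψ0, hψ1, hψone, hψzero⟩ := hpsi T subset_rfl
  -- THE MAIN STEP : ∫ ψ = 0
  have hαT : ∫ x, ψ x ∂μ = 0 := by
    by_contra hne
    have hα0 : 0 ≤ ∫ x, ψ x ∂μ := integral_nonneg hψ0
    have hαpos : 0 < ∫ x, ψ x ∂μ := hα0.lt_of_ne (Ne.symm hne)
    set Φ : Finset G → X → ℝ := fun W x => ∏ w ∈ W, ψ (C.act w x) with hΦdef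
    have hΦc : ∀ W, Continuous (Φ W) :=
      fun W => continuous_finset_prod _ fun w _ => hψc.comp (C.act_cont w)
    have hΦ0 : ∀ W x, 0 ≤ Φ W x := fun W x => Finset.prod_nonneg fun w _ => hψ0 _
    have hΦ1 : ∀ W x, Φ W x ≤ 1 :=
      fun W x => Finset.prod_le_one (fun w _ => hψ0 _) fun w _ => hψ1 _
    -- recurrence step
    have hrec : ∀ W : Finset G, 0 < ∫ x, Φ W x ∂μ → ∀ Cs : Set G, IsCompact Cs →
        ∃ σ : G, σ ∉ Cs ∧ 0 < ∫ x, Φ (W ∪ W.image (· * σ)) x ∂μ := by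
      intro W hpos Cs hCs
      have hΦ₀c : Continuous (Φ W) := hΦc W
      have hγ0 : 0 ≤ ∫ x, Φ W x * Φ W x ∂μ := integral_nonneg fun x => mul_self_nonneg _
      obtain ⟨n, hn⟩ := exists_nat_gt ((∫ x, Φ W x * Φ W x ∂μ) / (∫ x, Φ W x ∂μ) ^ 2)
      have hβpos : 0 < ∫ x, Φ W x ∂μ := hpos
      have hnpos : (0 : ℝ) < n := lt_of_le_of_lt (div_nonneg hγ0 (sq_nonneg _)) hn
      have hnβ : ∫ x, Φ W x * Φ W x ∂μ < n * (∫ x, Φ W x ∂μ) ^ 2 := by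
        rw [div_lt_iff₀ (by positivity)] at hn
        linarith
      obtain ⟨s, hsK⟩ := hseq Cs hCs
      have haint : ∀ i j : ℕ,
          Integrable (fun x => Φ W (C.act (s i) x) * Φ W (C.act (s j) x)) μ :=
        fun i j => aux_integrable μ
          ((hΦ₀c.comp (C.act_cont (s i))).mul (hΦ₀c.comp (C.act_cont (s j))))
      -- the cross-term identity
      have hcross : ∀ i j : ℕ, ∫ x, Φ W (C.act (s i) x) * Φ W (C.act (s j) x) ∂μ
          = ∫ x, Φ W x * Φ W (C.act (s j * (s i)⁻¹) x) ∂μ := by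
        intro i j
        have hHc : Continuous fun x => Φ W x * Φ W (C.act (s j * (s i)⁻¹) x) :=
          hΦ₀c.mul (hΦ₀c.comp (C.act_cont _))
        have hiv := hINVR _ hHc (s i)
        rw [← hiv]
        congr 1
        funext x
        rw [← C.act_mul]
        congr 2
        group
      -- some pair has positive correlation
      have hpair : ∃ i j : ℕ, i ≠ j ∧
          0 < ∫ x, Φ W x * Φ W (C.act (s j * (s i)⁻¹) x) ∂μ := by
        by_contra hC
        push_neg at hC
        have hFc : Continuous fun x => ∑ i ∈ Finset.range n, Φ W (C.act (s i) x) :=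
          continuous_finset_sum _ fun i _ => hΦ₀c.comp (C.act_cont (s i))
        have hFint' : ∀ i ∈ Finset.range n, Integrable (fun x => Φ W (C.act (s i) x)) μ :=
          fun i _ => aux_integrable μ (hΦ₀c.comp (C.act_cont (s i)))
        have h1 : ∫ x, (∑ i ∈ Finset.range n, Φ W (C.act (s i) x)) ∂μ
            = (n : ℝ) * ∫ x, Φ W x ∂μ := by
          rw [integral_finset_sum _ hFint',
            Finset.sum_congr rfl fun i _ => hINVR (Φ W) hΦ₀c (s i)]
          simp [Finset.sum_const, Finset.card_range]
        have h2 : ((n : ℝ) * ∫ x, Φ W x ∂μ) ^ 2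
            ≤ ∫ x, (∑ i ∈ Finset.range n, Φ W (C.act (s i) x)) ^ 2 ∂μ := by
          rw [← h1]; exact aux_sq_integral μ hFc
        have hexp : (fun x => (∑ i ∈ Finset.range n, Φ W (C.act (s i) x)) ^ 2)
            = fun x => ∑ i ∈ Finset.range n, ∑ j ∈ Finset.range n,
                Φ W (C.act (s i) x) * Φ W (C.act (s j) x) := by
          funext x
          rw [sq, Finset.sum_mul_sum]
        rw [show (∫ x, (∑ i ∈ Finset.range n, Φ W (C.act (s i) x)) ^ 2 ∂μ)
            = ∫ x, (∑ i ∈ Finset.range n, ∑ j ∈ Finset.range n,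
                Φ W (C.act (s i) x) * Φ W (C.act (s j) x)) ∂μ from by rw [hexp],
          integral_finset_sum _ (fun i _ => integrable_finset_sum _ fun j _ => haint i j),
          Finset.sum_congr rfl fun i _ => integral_finset_sum _ fun j _ => haint i j] at h2
        have hdiag : ∀ i : ℕ, ∫ x, Φ W (C.act (s i) x) * Φ W (C.act (s i) x) ∂μ
            = ∫ x, Φ W x * Φ W x ∂μ :=
          fun i => hINVR (fun x => Φ W x * Φ W x) (hΦ₀c.mul hΦ₀c) (s i)
        have hbound : ∑ i ∈ Finset.range n, ∑ j ∈ Finset.range n,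
            (∫ x, Φ W (C.act (s i) x) * Φ W (C.act (s j) x) ∂μ)
            ≤ (n : ℝ) * ∫ x, Φ W x * Φ W x ∂μ := by
          have hinner : ∀ i ∈ Finset.range n, ∑ j ∈ Finset.range n,
              (∫ x, Φ W (C.act (s i) x) * Φ W (C.act (s j) x) ∂μ)
              ≤ ∫ x, Φ W x * Φ W x ∂μ := by
            intro i hi
            have hle : ∀ j ∈ Finset.range n,
                (∫ x, Φ W (C.act (s i) x) * Φ W (C.act (s j) x) ∂μ) ≤
                  if j = i then ∫ x, Φ W x * Φ W x ∂μ else 0 := by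
              intro j _
              by_cases h : j = i
              · subst h; rw [if_pos rfl, hdiag]
              · rw [if_neg h, hcross]
                exact hC i j (Ne.symm h)
            refine le_trans (Finset.sum_le_sum hle) ?_
            rw [Finset.sum_ite_eq' (Finset.range n) i fun _ => ∫ x, Φ W x * Φ W x ∂μ]
            rw [if_pos hi]
          refine le_trans (Finset.sum_le_sum hinner) ?_
          simp [Finset.sum_const, Finset.card_range]
        nlinarith [h2, hbound, hnβ, hnpos, hβpos]
      obtain ⟨i, j, hij, hpos2⟩ := hpair
      refine ⟨s j * (s i)⁻¹, hsK i j hij, ?_⟩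
      have hge : ∀ x, Φ W x * Φ W (C.act (s j * (s i)⁻¹) x)
          ≤ Φ (W ∪ W.image (· * (s j * (s i)⁻¹))) x := by
        intro x
        have hrw : Φ W (C.act (s j * (s i)⁻¹) x)
            = ∏ w ∈ W.image (· * (s j * (s i)⁻¹)), ψ (C.act w x) := by
          show (∏ w ∈ W, ψ (C.act w (C.act (s j * (s i)⁻¹) x))) = _
          rw [Finset.prod_image (fun a _ b _ h => mul_right_cancel h)]
          refine Finset.prod_congr rfl fun w _ => ?_
          rw [C.act_mul w (s j * (s i)⁻¹) x]
        rw [hrw]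
        show (∏ w ∈ W, ψ (C.act w x)) * (∏ w ∈ W.image (· * (s j * (s i)⁻¹)), ψ (C.act w x))
          ≤ ∏ w ∈ W ∪ W.image (· * (s j * (s i)⁻¹)), ψ (C.act w x)
        rw [← Finset.prod_union_inter]
        have hint1 : ∏ w ∈ W ∩ W.image (· * (s j * (s i)⁻¹)), ψ (C.act w x) ≤ 1 :=
          Finset.prod_le_one (fun w _ => hψ0 _) fun w _ => hψ1 _
        have hun0 : 0 ≤ ∏ w ∈ W ∪ W.image (· * (s j * (s i)⁻¹)), ψ (C.act w x) :=
          Finset.prod_nonneg fun w _ => hψ0 _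
        exact mul_le_of_le_one_right hun0 hint1
      refine lt_of_lt_of_le hpos2 ?_
      refine integral_mono ?_ (aux_integrable μ (hΦc _)) hge
      exact aux_integrable μ (hΦ₀c.mul (hΦ₀c.comp (C.act_cont _)))
    -- separation set
    have hK₀c : IsCompact (W₀⁻¹ * W₀) := hW₀c.inv.mul hW₀c
    have hK₀1 : (1 : G) ∈ W₀⁻¹ * W₀ := by
      rw [show (1 : G) = 1⁻¹ * 1 by group]
      exact Set.mul_mem_mul (Set.inv_mem_inv.2 hW₀1) hW₀1
    have hK₀symm : ∀ k ∈ W₀⁻¹ * W₀, k⁻¹ ∈ W₀⁻¹ * W₀ := by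
      intro k hk
      obtain ⟨x, hx, y, hy, rfl⟩ := hk
      rw [mul_inv_rev]
      exact Set.mul_mem_mul (Set.inv_mem_inv.2 hy) (Set.mem_inv.1 hx)
    -- the invariant
    set Inv : Finset G × Finset G → Prop := fun p =>
      (1 : G) ∈ p.1 ∧ (↑p.2 : Set G) ⊆ (↑p.1 : Set G) ∧ 0 < ∫ x, Φ p.1 x ∂μ ∧
        (∀ a ∈ p.2, ∀ b ∈ p.2, a ≠ b → b ∉ (a * ·) '' (W₀⁻¹ * W₀)) with hInvdef
    have hstep : ∀ p : Finset G × Finset G, ∃ q : Finset G × Finset G,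
        Inv p → Inv q ∧ p.1 ⊆ q.1 ∧ p.2 ⊆ q.2 ∧ q.2.card = p.2.card + 1 := by
      intro p
      by_cases hp : Inv p
      · obtain ⟨h1p, h2p, h3p, h4p⟩ := hp
        have hCsc : IsCompact (⋃ a ∈ p.2, (a * ·) '' (W₀⁻¹ * W₀)) :=
          p.2.isCompact_biUnion fun a _ => hK₀c.image (continuous_mul_left a)
        obtain ⟨σ, hσCs, hσpos⟩ := hrec p.1 h3p _ hCsc
        have hσnotin : σ ∉ p.2 := by
          intro hσin
          exact hσCs (Set.mem_biUnion hσin ⟨1, hK₀1, mul_one σ⟩)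
        refine ⟨(p.1 ∪ p.1.image (· * σ), insert σ p.2), fun _ => ⟨⟨?_, ?_, hσpos, ?_⟩,
          Finset.subset_union_left, Finset.subset_insert _ _,
          Finset.card_insert_of_notMem hσnotin⟩⟩
        · exact Finset.mem_union_left _ h1p
        · intro b hb
          simp only [Finset.coe_insert, Set.mem_insert_iff] at hb
          rcases hb with rfl | hb
          · refine Finset.mem_coe.2 (Finset.mem_union_right _ ?_)
            exact Finset.mem_image.2 ⟨1, h1p, one_mul b⟩
          · exact Finset.mem_coe.2 (Finset.mem_union_left _ (Finset.mem_coe.1 (h2p hb)))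
        · intro a ha b hb hab
          rw [Finset.mem_insert] at ha hb
          rcases ha with rfl | ha
          · rcases hb with rfl | hb
            · exact absurd rfl hab
            · rintro ⟨k, hk, hbk⟩
              refine hσCs (Set.mem_biUnion hb ?_)
              refine ⟨k⁻¹, hK₀symm k hk, ?_⟩
              show b * k⁻¹ = a
              rw [← hbk]; group
          · rcases hb with rfl | hb
            · intro hmem
              exact hσCs (Set.mem_biUnion ha hmem)
            · exact h4p a ha b hb hab
      · exact ⟨p, fun h => absurd h hp⟩
    choose nxt hnxt using hstep
    set oseq : ℕ → Finset G × Finset G :=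
      fun k => Nat.rec (({1}, ∅) : Finset G × Finset G) (fun _ ih => nxt ih) k with hoseq
    have hoseqS : ∀ k, oseq (k + 1) = nxt (oseq k) := fun k => rfl
    have hoseq0 : oseq 0 = (({1} : Finset G), (∅ : Finset G)) := rfl
    have hInv0 : Inv (oseq 0) := by
      rw [hoseq0]
      refine ⟨Finset.mem_singleton_self 1, by simp, ?_, by simp⟩
      have hΦone : Φ ({1} : Finset G) = ψ := by
        funext x
        show (∏ w ∈ ({1} : Finset G), ψ (C.act w x)) = ψ x
        rw [Finset.prod_singleton, hact1]
      show 0 < ∫ x, Φ ({1} : Finset G) x ∂μ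
      rw [hΦone]
      exact hαpos
    have hInvAll : ∀ k, Inv (oseq k) := by
      intro k
      induction k with
      | zero => exact hInv0
      | succ k ih => rw [hoseqS]; exact (hnxt (oseq k) ih).1
    have hmono1 : ∀ i j, i ≤ j → (oseq i).1 ⊆ (oseq j).1 := by
      intro i j hij
      induction j, hij using Nat.le_induction with
      | base => exact subset_rfl
      | succ j hij ih =>
        rw [hoseqS]
        exact ih.trans (hnxt (oseq j) (hInvAll j)).2.1
    have hmono2 : ∀ i j, i ≤ j → (oseq i).2 ⊆ (oseq j).2 := by
      intro i j hij
      induction j, hij using Nat.le_induction with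
      | base => exact subset_rfl
      | succ j hij ih =>
        rw [hoseqS]
        exact ih.trans (hnxt (oseq j) (hInvAll j)).2.2.1
    have hcard : ∀ k, (oseq k).2.card = k := by
      intro k
      induction k with
      | zero => rw [hoseq0]; rfl
      | succ k ih =>
        rw [hoseqS, (hnxt (oseq k) (hInvAll k)).2.2.2, ih]
    -- L is not relatively compact
    have hLnc : ¬ IsCompact (closure (⋃ k, ((oseq k).1 : Set G))) := by
      intro hLc
      have hSsub : (⋃ k, ((oseq k).2 : Set G)) ⊆ closure (⋃ k, ((oseq k).1 : Set G)) := by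
        refine Set.iUnion_subset fun k => ?_
        refine subset_trans ?_ subset_closure
        refine subset_trans ((hInvAll k).2.1) ?_
        exact Set.subset_iUnion (fun k => ((oseq k).1 : Set G)) k
      have hSinf : (⋃ k, ((oseq k).2 : Set G)).Infinite := by
        intro hSfin
        have hsub : ∀ k, (oseq k).2 ⊆ hSfin.toFinset := by
          intro k x hx
          rw [Set.Finite.mem_toFinset]
          exact Set.mem_iUnion.2 ⟨k, hx⟩
        have hle : ∀ k : ℕ, k ≤ hSfin.toFinset.card := by
          intro k
          rw [← hcard k]
          exact Finset.card_le_card (hsub k)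
        exact absurd (hle (hSfin.toFinset.card + 1)) (by omega)
      have h1int : (1 : G) ∈ interior W₀ := mem_interior_iff_mem_nhds.2 hW₀n
      have hcov : closure (⋃ k, ((oseq k).1 : Set G)) ⊆ ⋃ g : G, (g * ·) '' interior W₀ :=
        fun x _ => Set.mem_iUnion.2 ⟨x, ⟨1, h1int, mul_one x⟩⟩
      obtain ⟨tf, htf⟩ := hLc.elim_finite_subcover (fun g : G => (g * ·) '' interior W₀)
        (fun g => (isOpenMap_mul_left g) _ isOpen_interior) hcov
      have hc : ∀ x ∈ closure (⋃ k, ((oseq k).1 : Set G)),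
          ∃ g ∈ tf, x ∈ (g * ·) '' interior W₀ := by
        intro x hx
        have := htf hx
        rw [Set.mem_iUnion₂] at this
        obtain ⟨g, hg, hmem⟩ := this
        exact ⟨g, hg, hmem⟩
      set c : G → G := fun x =>
        if h : ∃ g ∈ tf, x ∈ (g * ·) '' interior W₀ then h.choose else 1 with hcdef
      have hcspec : ∀ x ∈ closure (⋃ k, ((oseq k).1 : Set G)),
          c x ∈ tf ∧ x ∈ (c x * ·) '' interior W₀ := by
        intro x hx
        have hex := hc x hx
        rw [hcdef]
        simp only [dif_pos hex]
        exact ⟨hex.choose_spec.1, hex.choose_spec.2⟩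
      have hmap : Set.MapsTo c (⋃ k, ((oseq k).2 : Set G)) (↑tf : Set G) :=
        fun x hx => (hcspec x (hSsub hx)).1
      obtain ⟨x, hxS, y, hyS, hxy, hcxy⟩ :=
        hSinf.exists_ne_map_eq_of_mapsTo hmap tf.finite_toSet
      obtain ⟨u, hu, hux⟩ := (hcspec x (hSsub hxS)).2
      obtain ⟨v, hv, hvy'⟩ := (hcspec y (hSsub hyS)).2
      have hvy : c x * v = y := by rw [hcxy]; exact hvy'
      have hyK : y ∈ (x * ·) '' (W₀⁻¹ * W₀) := by
        refine ⟨u⁻¹ * v, Set.mul_mem_mul (Set.inv_mem_inv.2 (interior_subset hu))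
          (interior_subset hv), ?_⟩
        show x * (u⁻¹ * v) = y
        rw [← hux, ← hvy]; group
      obtain ⟨k₁, hk₁⟩ := Set.mem_iUnion.1 hxS
      obtain ⟨k₂, hk₂⟩ := Set.mem_iUnion.1 hyS
      have hxm : x ∈ (oseq (max k₁ k₂)).2 := hmono2 _ _ (le_max_left _ _) hk₁
      have hym : y ∈ (oseq (max k₁ k₂)).2 := hmono2 _ _ (le_max_right _ _) hk₂
      exact (hInvAll (max k₁ k₂)).2.2.2 x hxm y hym hxy hyK
    -- apply right translation compactness
    obtain ⟨Fs, hFsL, hFsfin, hFscpt⟩ := hUT _ hLnc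
    have hFm : ∃ m, Fs ⊆ ((oseq m).1 : Set G) := by
      have hgen : ∀ S : Set G, S.Finite → S ⊆ (⋃ k, ((oseq k).1 : Set G)) →
          ∃ m, S ⊆ ((oseq m).1 : Set G) := by
        intro S hS
        refine Set.Finite.induction_on
          (motive := fun S _ => S ⊆ (⋃ k, ((oseq k).1 : Set G)) → ∃ m, S ⊆ ((oseq m).1 : Set G))
          S hS (fun _ => ⟨0, Set.empty_subset _⟩) ?_
        intro a S' ha hS' ih hsub
        obtain ⟨m', hm'⟩ := ih (subset_trans (Set.subset_insert _ _) hsub)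
        obtain ⟨k, hk⟩ := Set.mem_iUnion.1 (hsub (Set.mem_insert _ _))
        refine ⟨max k m', Set.insert_subset ?_ (subset_trans hm' ?_)⟩
        · exact hmono1 _ _ (le_max_left _ _) hk
        · exact hmono1 _ _ (le_max_right _ _)
      exact hgen Fs hFsfin hFsL
    obtain ⟨m, hm⟩ := hFm
    have hDsub : {t : G | ∀ w ∈ (oseq m).1, w * t ∈ Uo * T}
        ⊆ ⋂ b ∈ Fs, (b * ·) ⁻¹' (U * T) := by
      intro t ht
      rw [Set.mem_iInter₂]
      intro b hb
      have h1 : b * t ∈ Uo * T := ht b (hm hb)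
      exact Set.mem_preimage.2 (Set.mul_subset_mul_right hUoU h1)
    have hDc : IsCompact (closure {t : G | ∀ w ∈ (oseq m).1, w * t ∈ Uo * T}) :=
      IsCompact.of_isClosed_subset hFscpt isClosed_closure (closure_mono hDsub)
    have hDU : {t : G | ∀ w ∈ (oseq m).1, w * t ∈ Uo * T} ⊆ Uo * T := by
      intro t ht
      have := ht 1 (hInvAll m).1
      rwa [one_mul] at this
    have hDnull := hmain1 _ hDc hDU
    have hposm := (hInvAll m).2.2.1
    have hOopen : IsOpen {x : X | 0 < Φ (oseq m).1 x} :=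
      isOpen_lt continuous_const (hΦc _)
    have hOclos : {x : X | 0 < Φ (oseq m).1 x}
        ⊆ closure (C.eps '' {t : G | ∀ w ∈ (oseq m).1, w * t ∈ Uo * T}) := by
      refine subset_trans (aux_open_subset_closure C.dense hOopen)
        (closure_mono (Set.image_mono ?_))
      intro t ht
      have ht' : 0 < Φ (oseq m).1 (C.eps t) := ht
      show ∀ w ∈ (oseq m).1, w * t ∈ Uo * T
      intro w hw
      by_contra hwt
      have hzero : ψ (C.act w (C.eps t)) = 0 := by
        rw [C.act_eps]; exact hψzero _ hwt
      have hzero2 : Φ (oseq m).1 (C.eps t) = 0 := by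
        show (∏ w ∈ (oseq m).1, ψ (C.act w (C.eps t))) = 0
        exact Finset.prod_eq_zero hw hzero
      rw [hzero2] at ht'
      exact lt_irrefl 0 ht'
    have hOnull : μ {x : X | 0 < Φ (oseq m).1 x} = 0 := measure_mono_null hOclos hDnull
    have hle : ∫ x, Φ (oseq m).1 x ∂μ
        ≤ ∫ x, ({x : X | 0 < Φ (oseq m).1 x}).indicator (fun _ => (1 : ℝ)) x ∂μ := by
      refine integral_mono (aux_integrable μ (hΦc _))
        ((integrable_const (1 : ℝ)).indicator hOopen.measurableSet) ?_
      intro x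
      by_cases hx : x ∈ {x : X | 0 < Φ (oseq m).1 x}
      · rw [Set.indicator_of_mem hx]
        exact hΦ1 _ _
      · rw [Set.indicator_of_notMem hx]
        exact not_lt.1 hx
    rw [integral_indicator_const (1 : ℝ) hOopen.measurableSet, measureReal_def, hOnull] at hle
    simp at hle
    linarith
  -- FINISH
  intro V hV hVc
  have hbndT : ∀ a : G, μ (closure (C.eps '' ((a * ·) '' (V₀ * T)))) = 0 := by
    intro a
    apply hzero_of_bnd
    have := hbnd T ψ hψc hψ0 hψone a
    rwa [hαT] at this
  obtain ⟨tf, htf⟩ := hcover (closure V) hVc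
  have hsub : Set.image2 C.act V (closure (C.eps '' T)) ⊆
      ⋃ g ∈ tf, closure (C.eps '' ((g * ·) '' (V₀ * T))) := by
    rw [Set.image2_subset_iff]
    intro v hv x hx
    have hvcl := htf (subset_closure hv)
    rw [Set.mem_iUnion₂] at hvcl
    obtain ⟨g, hg, v₀, hv₀, hveq⟩ := hvcl
    refine Set.mem_biUnion hg ?_
    have h1 : C.act v x ∈ C.act v '' closure (C.eps '' T) := ⟨x, hx, rfl⟩
    have h2 : C.act v '' closure (C.eps '' T) ⊆ closure (C.act v '' (C.eps '' T)) :=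
      image_closure_subset_closure_image (C.act_cont v)
    have h3 : C.act v '' (C.eps '' T) ⊆ C.eps '' ((g * ·) '' (V₀ * T)) := by
      rintro _ ⟨_, ⟨τ, hτ, rfl⟩, rfl⟩
      refine ⟨g * (v₀ * τ), ⟨v₀ * τ, Set.mul_mem_mul hv₀ hτ, rfl⟩, ?_⟩
      rw [C.act_eps]
      congr 1
      rw [← hveq]; group
    exact closure_mono h3 (h2 h1)
  refine le_antisymm ?_ zero_le
  refine le_trans (measure_mono hsub) ?_
  refine le_trans (measure_biUnion_finset_le _ _) ?_
  rw [Finset.sum_congr rfl fun g _ => hbndT g]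
  simp
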